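/- For the negative binomial distribution with parameters r > 1 and q ∈ (0,1), for every k ∈ ℕ₀ large enough that 2(r-1)/(k+2) < q/(1-q), the tail ratio satisfies (1 - P(k))/p(k+1) ≤ 2/q. -/

import Mathlib

set_option maxHeartbeats 1000000

open Filter Topology Metric

noncomputable def nbc (r : ℝ) (k : ℕ) : ℝ :=
  Real.Gamma ((k:ℝ) + r) / (Real.Gamma r * (Nat.factorial k : ℝ))

lemma nbc_pos (r : ℝ) (hr : 0 < r) (k : ℕ) : 0 < nbc r k := by
  have h1 : 0 < Real.Gamma ((k:ℝ) + r) := Real.Gamma_pos_of_pos (by positivity)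
  have h2 : 0 < Real.Gamma r := Real.Gamma_pos_of_pos hr
  have h3 : 0 < (Nat.factorial k : ℝ) := by exact_mod_cast Nat.factorial_pos k
  exact div_pos h1 (by positivity)

lemma nbc_zero (r : ℝ) (hr : 0 < r) : nbc r 0 = 1 := by
  simp [nbc, div_self (ne_of_gt (Real.Gamma_pos_of_pos hr))]

lemma nbc_succ (r : ℝ) (hr : 0 < r) (k : ℕ) :
    ((k:ℝ) + 1) * nbc r (k+1) = ((k:ℝ) + r) * nbc r k := by
  have hkr : (k:ℝ) + r ≠ 0 := by positivity
  have hG2 : Real.Gamma (((k:ℝ) + 1) + r) = ((k:ℝ) + r) * Real.Gamma ((k:ℝ) + r) := by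
    rw [show (k:ℝ) + 1 + r = ((k:ℝ) + r) + 1 by ring, Real.Gamma_add_one hkr]
  have hGr : Real.Gamma r ≠ 0 := ne_of_gt (Real.Gamma_pos_of_pos hr)
  have hf : (Nat.factorial k : ℝ) ≠ 0 := by exact_mod_cast (Nat.factorial_pos k).ne'
  unfold nbc
  push_cast [Nat.factorial_succ]
  rw [hG2]
  field_simp

lemma nb_main (r x : ℝ) (hr : 0 < r) (hx0 : 0 < x) (hx1 : x < 1) :
    Summable (fun k : ℕ => nbc r k * x ^ k) ∧
      (1 - x) ^ r * ∑' k : ℕ, nbc r k * x ^ k = 1 := by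
  set ρ : ℝ := (1 + x) / 2 with hρ
  have hρ0 : 0 < ρ := by positivity
  have hρ1 : ρ < 1 := by rw [hρ]; linarith
  have hxρ : x < ρ := by rw [hρ]; linarith
  set L : ℝ := (1 + ρ) / 2 with hL
  have hρL : ρ < L := by rw [hL]; linarith
  have hL1 : L < 1 := by rw [hL]; linarith
  set u : ℕ → ℝ := fun k => nbc r k * ((k:ℝ) * ρ ^ (k-1)) with hu_def
  have hu : Summable u := by
    apply summable_of_ratio_norm_eventually_le hL1
    have htend : Tendsto (fun k : ℕ => (1 + r / (k:ℝ)) * ρ) atTop (𝓝 ρ) := by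
      have h1 : Tendsto (fun k : ℕ => r / (k:ℝ)) atTop (𝓝 0) :=
        tendsto_const_div_atTop_nhds_zero_nat r
      have := ((tendsto_const_nhds (x := (1:ℝ))).add h1).mul_const ρ
      simpa using this
    have hev : ∀ᶠ k : ℕ in atTop, (1 + r / (k:ℝ)) * ρ < L :=
      htend.eventually_lt_const hρL
    filter_upwards [hev, eventually_ge_atTop 1] with k hkL hk1
    have hk0 : (0:ℝ) < (k:ℝ) := by exact_mod_cast hk1
    have hak : 0 < nbc r k := nbc_pos r hr k
    have hak1 : 0 < nbc r (k+1) := nbc_pos r hr (k+1)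
    have hpow : ρ ^ (k-1) * ρ = ρ ^ k := by
      rw [← pow_succ, Nat.sub_add_cancel hk1]
    have huk : 0 ≤ u k := by
      rw [hu_def]; positivity
    have hstep : u (k+1) = ((1 + r / (k:ℝ)) * ρ) * u k := by
      have hrec := nbc_succ r hr k
      have e2 : ((1 + r/(k:ℝ))*ρ) * (nbc r k * ((k:ℝ) * ρ^(k-1)))
          = (((k:ℝ)+r) * nbc r k) * ρ^k := by
        rw [← hpow]; field_simp
      show nbc r (k+1) * (((k+1:ℕ):ℝ) * ρ ^ ((k+1)-1)) = ((1 + r / (k:ℝ)) * ρ) * u k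
      rw [show (k+1)-1 = k from rfl]
      simp only [hu_def]
      rw [e2]
      push_cast
      linear_combination (ρ^k) * hrec
    calc ‖u (k+1)‖ = u (k+1) := by
          rw [Real.norm_of_nonneg]
          rw [hstep]
          have : 0 ≤ (1 + r / (k:ℝ)) * ρ := by positivity
          exact mul_nonneg this huk
      _ = ((1 + r / (k:ℝ)) * ρ) * u k := hstep
      _ ≤ L * u k := mul_le_mul_of_nonneg_right hkL.le huk
      _ = L * ‖u k‖ := by rw [Real.norm_of_nonneg huk]
  -- the ball
  have htop : IsOpen (ball (0:ℝ) ρ) := isOpen_ball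
  have hconn : IsPreconnected (ball (0:ℝ) ρ) := (convex_ball (0:ℝ) ρ).isPreconnected
  have h0mem : (0:ℝ) ∈ ball (0:ℝ) ρ := mem_ball_self hρ0
  have hg : ∀ (k : ℕ) (y : ℝ), y ∈ ball (0:ℝ) ρ →
      HasDerivAt (fun z : ℝ => nbc r k * z ^ k) (nbc r k * ((k:ℝ) * y ^ (k-1))) y :=
    fun k y _ => (hasDerivAt_pow k y).const_mul (nbc r k)
  have hg' : ∀ (k : ℕ) (y : ℝ), y ∈ ball (0:ℝ) ρ →
      ‖nbc r k * ((k:ℝ) * y ^ (k-1))‖ ≤ u k := by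
    intro k y hy
    have hyρ : |y| < ρ := by simpa [Real.dist_eq] using hy
    rw [hu_def]
    simp only [norm_mul, Real.norm_eq_abs, abs_pow]
    rw [abs_of_pos (nbc_pos r hr k), Nat.abs_cast]
    have hpw : |y|^(k-1) ≤ ρ^(k-1) := pow_le_pow_left₀ (abs_nonneg y) hyρ.le _
    exact mul_le_mul_of_nonneg_left
      (mul_le_mul_of_nonneg_left hpw (Nat.cast_nonneg k)) (nbc_pos r hr k).le
  have hg0 : Summable (fun k : ℕ => nbc r k * (0:ℝ) ^ k) := by
    apply summable_of_ne_finset_zero (s := {0})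
    intro k hk
    simp only [Finset.mem_singleton] at hk
    simp [zero_pow hk]
  have Hsum : ∀ y ∈ ball (0:ℝ) ρ, Summable (fun k : ℕ => nbc r k * y ^ k) :=
    fun y hy => summable_of_summable_hasDerivAt_of_isPreconnected hu htop hconn hg hg'
      h0mem hg0 hy
  have HD : ∀ y ∈ ball (0:ℝ) ρ,
      HasDerivAt (fun z : ℝ => ∑' k : ℕ, nbc r k * z ^ k)
        (∑' k : ℕ, nbc r k * ((k:ℝ) * y ^ (k-1))) y :=
    fun y hy => hasDerivAt_tsum_of_isPreconnected hu htop hconn hg hg' h0mem hg0 hy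
  set f : ℝ → ℝ := fun y => ∑' k : ℕ, nbc r k * y ^ k with hf_def
  set f' : ℝ → ℝ := fun y => ∑' k : ℕ, nbc r k * ((k:ℝ) * y ^ (k-1)) with hf'_def
  have ODE : ∀ y ∈ ball (0:ℝ) ρ, (1 - y) * f' y = r * f y := by
    intro y hy
    have S1 : Summable (fun k : ℕ => nbc r k * y ^ k) := Hsum y hy
    have S2 : Summable (fun k : ℕ => nbc r k * ((k:ℝ) * y ^ (k-1))) :=
      Summable.of_norm_bounded hu (fun k => hg' k y hy)
    have S3 : Summable (fun k : ℕ => (k:ℝ) * (nbc r k * y ^ k)) := by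
      apply (S2.mul_right y).congr
      intro k
      cases k with
      | zero => simp
      | succ n =>
        show nbc r (n+1) * (((n+1:ℕ):ℝ) * y ^ n) * y = ((n+1:ℕ):ℝ) * (nbc r (n+1) * y ^ (n+1))
        rw [pow_succ]; ring
    have hterm : ∀ k : ℕ, nbc r (k+1) * (((k+1:ℕ):ℝ) * y ^ ((k+1)-1))
        = (k:ℝ) * (nbc r k * y ^ k) + r * (nbc r k * y ^ k) := by
      intro k
      have hrec := nbc_succ r hr k
      have h1 : (k+1) - 1 = k := rfl
      rw [h1]
      push_cast
      linear_combination (y^k) * hrec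
    have hshift : f' y = ∑' k : ℕ, ((k:ℝ) * (nbc r k * y ^ k) + r * (nbc r k * y ^ k)) := by
      rw [hf'_def]
      simp only
      rw [Summable.tsum_eq_zero_add S2]
      simp only [Nat.cast_zero, zero_mul, mul_zero, zero_add]
      exact tsum_congr (fun k => hterm k)
    have hsum_split : f' y = (∑' k : ℕ, (k:ℝ) * (nbc r k * y ^ k)) + r * f y := by
      rw [hshift, Summable.tsum_add S3 (S1.mul_left r), tsum_mul_left]
    have hyf : ∑' k : ℕ, (k:ℝ) * (nbc r k * y ^ k) = f' y * y := by
      rw [hf'_def]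
      simp only
      rw [← tsum_mul_right]
      apply tsum_congr
      intro k
      cases k with
      | zero => simp
      | succ n =>
        show ((n+1:ℕ):ℝ) * (nbc r (n+1) * y ^ (n+1)) = nbc r (n+1) * (((n+1:ℕ):ℝ) * y ^ n) * y
        rw [pow_succ]; ring
    rw [hyf] at hsum_split
    linarith [hsum_split]
  have HDF : ∀ y ∈ ball (0:ℝ) ρ,
      HasDerivAt (fun z : ℝ => (1 - z) ^ r * f z) 0 y := by
    intro y hy
    have hyρ : |y| < ρ := by simpa [Real.dist_eq] using hy
    have hy1 : 0 < 1 - y := by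
      have := (abs_lt.mp hyρ).2
      linarith
    have hbase : HasDerivAt (fun z : ℝ => 1 - z) (-1) y := (hasDerivAt_id y).const_sub 1
    have h1 : HasDerivAt (fun z : ℝ => (1 - z) ^ r) ((r * (1 - y) ^ (r - 1)) * (-1)) y := by
      have := (Real.hasDerivAt_rpow_const (x := 1 - y) (p := r) (Or.inl hy1.ne')).comp y hbase
      exact this
    have h2 := h1.mul (HD y hy)
    have hfy : (∑' k : ℕ, nbc r k * ((k:ℝ) * y ^ (k-1))) = f' y := rfl
    rw [hfy] at h2
    have hval : (r * (1 - y) ^ (r - 1)) * (-1) * f y + (1 - y) ^ r * f' y = 0 := by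
      have hode := ODE y hy
      have hsplit : (1 - y) ^ r = (1 - y) ^ (r-1) * (1 - y) := by
        rw [← Real.rpow_add_one hy1.ne' (r-1)]; ring_nf
      rw [hsplit]
      linear_combination ((1 - y)^(r-1)) * hode
    rw [hval] at h2
    exact h2
  -- MVT
  have hxmem : x ∈ ball (0:ℝ) ρ := by
    rw [mem_ball, Real.dist_eq, sub_zero, abs_of_pos hx0]; exact hxρ
  have hcont : ContinuousOn (fun z : ℝ => (1 - z) ^ r * f z) (Set.Icc 0 x) := by
    intro y hy
    have hyb : y ∈ ball (0:ℝ) ρ := by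
      rw [mem_ball, Real.dist_eq, sub_zero, abs_of_nonneg hy.1]
      exact lt_of_le_of_lt hy.2 hxρ
    exact (HDF y hyb).continuousAt.continuousWithinAt
  obtain ⟨c, hc, hceq⟩ := exists_hasDerivAt_eq_slope (fun z : ℝ => (1 - z) ^ r * f z)
    (fun _ => (0:ℝ)) hx0 hcont
    (fun y hy => HDF y (by
      rw [mem_ball, Real.dist_eq, sub_zero, abs_of_pos hy.1]
      exact lt_trans hy.2 hxρ))
  have hslope : ((1 - x) ^ r * f x - (1 - 0) ^ r * f 0) / (x - 0) = 0 := hceq.symm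
  have hFx : (1 - x) ^ r * f x = (1 - (0:ℝ)) ^ r * f 0 := by
    rw [div_eq_zero_iff] at hslope
    rcases hslope with h | h
    · linarith
    · linarith
  have hf0 : f 0 = 1 := by
    rw [hf_def]
    simp only
    rw [tsum_eq_single 0 (fun k hk => by simp [zero_pow hk])]
    simp [nbc_zero r hr]
  rw [hf0] at hFx
  simp only [sub_zero, Real.one_rpow, mul_one] at hFx
  exact ⟨Hsum x hxmem, hFx⟩

/-- Negative binomial tail-ratio bound for `r > 1`: if `2(r-1)/(k+2) < q/(1-q)` then
`(1 - P(k))/p(k+1) ≤ 2/q`. -/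
theorem stmt_10 (r q : ℝ) (hr : 1 < r) (hq0 : 0 < q) (hq1 : q < 1)
    (p : ℕ → ℝ) (P : ℕ → ℝ)
    (hp : ∀ k : ℕ, p k = Real.Gamma ((k : ℝ) + r) / (Real.Gamma r * (Nat.factorial k : ℝ))
      * (1 - q) ^ k * q ^ r)
    (hP : ∀ k : ℕ, P k = ∑ ℓ ∈ Finset.range (k + 1), p ℓ) :
    ∀ k : ℕ, 2 * (r - 1) / ((k : ℝ) + 2) < q / (1 - q) →
      (1 - P k) / p (k + 1) ≤ 2 / q := by
  intro k hk
  have hr0 : 0 < r := by linarith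
  have hx0 : 0 < 1 - q := by linarith
  have hx1 : 1 - q < 1 := by linarith
  obtain ⟨hsum, hval⟩ := nb_main r (1 - q) hr0 hx0 hx1
  have hq' : (1 : ℝ) - (1 - q) = q := by ring
  rw [hq'] at hval
  have hqr : (0:ℝ) < q ^ r := Real.rpow_pos_of_pos hq0 r
  have hpk : ∀ m : ℕ, p m = nbc r m * (1 - q) ^ m * q ^ r := fun m => hp m
  have ppos : ∀ m : ℕ, 0 < p m := by
    intro m
    rw [hpk m]
    have := nbc_pos r hr0 m
    positivity
  -- total mass one
  have hS : HasSum p 1 := by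
    have h1 := hsum.hasSum.mul_right (q ^ r)
    have h2 : (∑' m : ℕ, nbc r m * (1 - q) ^ m) * q ^ r = 1 := by
      rw [mul_comm]; exact hval
    rw [h2] at h1
    exact h1.congr_fun (fun m => hpk m)
  -- geometric-type decay beyond k
  set c : ℝ := 1 - q / 2 with hc
  have hc0 : 0 < c := by rw [hc]; linarith
  have hc1 : c < 1 := by rw [hc]; linarith
  have hkey : 2 * (r - 1) * (1 - q) < q * ((k:ℝ) + 2) := by
    rw [div_lt_div_iff₀ (by positivity) hx0] at hk
    linarith
  have ratio : ∀ m : ℕ, k + 1 ≤ m → p (m + 1) ≤ c * p m := by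
    intro m hm
    have hm' : (k:ℝ) + 2 ≤ (m:ℝ) + 1 := by
      have : (k:ℝ) + 1 ≤ (m:ℝ) := by exact_mod_cast hm
      linarith
    have hrec := nbc_succ r hr0 m
    have hnb : 0 < nbc r m := nbc_pos r hr0 m
    have hm1 : (0:ℝ) < (m:ℝ) + 1 := by positivity
    -- key scalar inequality : ((m:ℝ) + r) * (1 - q) ≤ c * ((m:ℝ) + 1)
    have hscal : ((m:ℝ) + r) * (1 - q) ≤ c * ((m:ℝ) + 1) := by
      have h3 : q * ((k:ℝ) + 2) ≤ q * ((m:ℝ) + 1) :=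
        mul_le_mul_of_nonneg_left hm' hq0.le
      rw [hc]
      nlinarith [hkey, h3]
    have hnb1 : nbc r (m+1) * ((m:ℝ) + 1) = ((m:ℝ) + r) * nbc r m := by
      linarith [hrec]
    rw [hpk (m+1), hpk m]
    rw [pow_succ]
    have goal2 : nbc r (m+1) * ((1 - q) ^ m * (1 - q)) ≤ c * (nbc r m * (1 - q) ^ m) := by
      have e1 : nbc r (m+1) * (1 - q) ≤ c * nbc r m := by
        rw [← mul_le_mul_iff_of_pos_right hm1]
        calc nbc r (m+1) * (1 - q) * ((m:ℝ) + 1)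
            = ((m:ℝ) + r) * nbc r m * (1 - q) := by
              rw [← hnb1]; ring
          _ ≤ c * ((m:ℝ) + 1) * nbc r m := by
              have := mul_le_mul_of_nonneg_right hscal hnb.le
              linarith [this]
          _ = c * nbc r m * ((m:ℝ) + 1) := by ring
      have hpw : (0:ℝ) ≤ (1 - q) ^ m := by positivity
      calc nbc r (m+1) * ((1 - q) ^ m * (1 - q))
          = (nbc r (m+1) * (1 - q)) * (1 - q) ^ m := by ring
        _ ≤ (c * nbc r m) * (1 - q) ^ m := mul_le_mul_of_nonneg_right e1 hpw
        _ = c * (nbc r m * (1 - q) ^ m) := by ring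
    calc nbc r (m+1) * ((1 - q) ^ m * (1 - q)) * q ^ r
        ≤ c * (nbc r m * (1 - q) ^ m) * q ^ r :=
          mul_le_mul_of_nonneg_right goal2 hqr.le
      _ = c * (nbc r m * (1 - q) ^ m * q ^ r) := by ring
  have geom : ∀ i : ℕ, p (k + 1 + i) ≤ p (k + 1) * c ^ i := by
    intro i
    induction i with
    | zero => simp
    | succ n ih =>
      have h1 : p (k + 1 + n + 1) ≤ c * p (k + 1 + n) := ratio (k + 1 + n) (by omega)
      have h2 : c * p (k + 1 + n) ≤ c * (p (k + 1) * c ^ n) :=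
        mul_le_mul_of_nonneg_left ih hc0.le
      calc p (k + 1 + (n + 1)) = p (k + 1 + n + 1) := by ring_nf
        _ ≤ c * (p (k + 1) * c ^ n) := le_trans h1 h2
        _ = p (k + 1) * c ^ (n + 1) := by rw [pow_succ]; ring
  have htail_summ : Summable (fun i : ℕ => p (i + (k + 1))) :=
    (summable_nat_add_iff (k + 1)).mpr hS.summable
  have hgeo_summ : Summable (fun i : ℕ => p (k + 1) * c ^ i) :=
    (summable_geometric_of_lt_one hc0.le hc1).mul_left _
  have htail : ∑' i : ℕ, p (i + (k + 1)) ≤ p (k + 1) * (2 / q) := by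
    have h1 : ∑' i : ℕ, p (i + (k + 1)) ≤ ∑' i : ℕ, p (k + 1) * c ^ i := by
      apply Summable.tsum_le_tsum _ htail_summ hgeo_summ
      intro i
      rw [add_comm i (k+1)]
      exact geom i
    have h2 : ∑' i : ℕ, p (k + 1) * c ^ i = p (k + 1) * (2 / q) := by
      rw [tsum_mul_left, tsum_geometric_of_lt_one hc0.le hc1]
      congr 1
      rw [hc]
      rw [show (1:ℝ) - (1 - q / 2) = q / 2 by ring]
      rw [inv_div]
    rw [← h2]; exact h1
  have h1P : 1 - P k = ∑' i : ℕ, p (i + (k + 1)) := by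
    have hsa := Summable.sum_add_tsum_nat_add (f := p) (k + 1) hS.summable
    rw [hS.tsum_eq] at hsa
    rw [hP k]
    linarith
  rw [div_le_iff₀ (ppos (k + 1)), h1P]
  calc ∑' i : ℕ, p (i + (k + 1)) ≤ p (k + 1) * (2 / q) := htail
    _ = 2 / q * p (k + 1) := by ring
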